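/- Let G be a finite C4-free simple graph and v a vertex of G. Then \sum_{e \in D_v(0)} |Sect_e(2)| \le 2 |D_v(2)|. -/
import Mathlib


open SimpleGraph

/-- A graph is `C₄`-free if it contains no cycle of length four as a subgraph,
i.e. there are no four distinct vertices `a, b, c, d` with
`a ~ b`, `b ~ c`, `c ~ d` and `d ~ a`. -/
def C4Free {V : Type*} (G : SimpleGraph V) : Prop :=
  ¬ ∃ a b c d : V, a ≠ b ∧ a ≠ c ∧ a ≠ d ∧ b ≠ c ∧ b ≠ d ∧ c ≠ d ∧
      G.Adj a b ∧ G.Adj b c ∧ G.Adj c d ∧ G.Adj d a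

/-- The distance between two edges (or generally two pairs of vertices):
the minimum over endpoints `x ∈ e`, `y ∈ f` of the graph distance. -/
noncomputable def edgeDist {V : Type*} (G : SimpleGraph V) (e f : Sym2 V) : ℕ∞ :=
  ⨅ x ∈ e, ⨅ y ∈ f, G.edist x y

/-- `Dkl G v k l` is the set of edges `{x, y}` of `G` with
`dist(x, v) = k` and `dist(y, v) = l`. -/
def Dkl {V : Type*} (G : SimpleGraph V) (v : V) (k l : ℕ) : Set (Sym2 V) :=
  {e | e ∈ G.edgeSet ∧ ∃ x y : V, e = s(x, y) ∧
    G.edist x v = (k : ℕ∞) ∧ G.edist y v = (l : ℕ∞)}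

/-- `D G v k = D_v(k) = D_v(k, k) ∪ D_v(k, k+1)`. -/
def D {V : Type*} (G : SimpleGraph V) (v : V) (k : ℕ) : Set (Sym2 V) :=
  Dkl G v k k ∪ Dkl G v k (k + 1)

/-- `Sect G v e = Sect_e(2)`: the edges of `D_v(2)` at distance exactly one
from the edge `e`. -/
noncomputable def Sect {V : Type*} (G : SimpleGraph V) (v : V) (e : Sym2 V) : Set (Sym2 V) :=
  {f | f ∈ D G v 2 ∧ edgeDist G e f = 1}

/-- An induced matching: a set `M` of edges of `G` such that the subgraph of `G`
induced by the set of all endpoints of edges in `M` has edge set exactly `M`. -/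
def IsInducedMatching {V : Type*} (G : SimpleGraph V) (M : Set (Sym2 V)) : Prop :=
  M ⊆ G.edgeSet ∧ {e ∈ G.edgeSet | ∀ x ∈ e, ∃ f ∈ M, x ∈ f} = M

lemma sym2_biInf {V β : Type*} [CompleteLattice β] (a b : V) (F : V → β) :
    (⨅ x ∈ s(a, b), F x) = F a ⊓ F b := by
  apply le_antisymm
  · exact le_inf (iInf₂_le a (Sym2.mem_mk_left a b)) (iInf₂_le b (Sym2.mem_mk_right a b))
  · refine le_iInf₂ fun x hx => ?_
    rcases Sym2.mem_iff.mp hx with rfl | rfl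
    · exact inf_le_left
    · exact inf_le_right

lemma edgeDist_eq {V : Type*} (G : SimpleGraph V) (a b c d : V) :
    edgeDist G s(a, b) s(c, d) =
      (G.edist a c ⊓ G.edist a d) ⊓ (G.edist b c ⊓ G.edist b d) := by
  unfold edgeDist
  rw [sym2_biInf]
  congr 1 <;> rw [sym2_biInf]

/-- Structure of edges in `D_v(0)`. -/
lemma mem_D0 {V : Type*} {G : SimpleGraph V} {v : V} {e : Sym2 V} (he : e ∈ D G v 0) :
    ∃ u, e = s(v, u) ∧ G.Adj v u := by
  rcases he with ⟨hes, x, y, rfl, hx, hy⟩ | ⟨hes, x, y, rfl, hx, hy⟩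
  · rw [Nat.cast_zero, SimpleGraph.edist_eq_zero_iff] at hx hy
    subst hx; subst hy
    exact absurd hes (by simp)
  · rw [Nat.cast_zero, SimpleGraph.edist_eq_zero_iff] at hx
    subst hx
    norm_num [SimpleGraph.edist_eq_one_iff_adj] at hy
    exact ⟨y, rfl, ((G.mem_edgeSet).mp hes)⟩

/-- Structure of edges in `D_v(2)`. -/
lemma mem_D2 {V : Type*} {G : SimpleGraph V} {v : V} {f : Sym2 V} (hf : f ∈ D G v 2) :
    ∃ x y, f = s(x, y) ∧ G.edist x v = 2 ∧ (G.edist y v = 2 ∨ G.edist y v = 3) := by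
  rcases hf with ⟨hes, x, y, rfl, hx, hy⟩ | ⟨hes, x, y, rfl, hx, hy⟩ <;>
    norm_num at hx hy
  · exact ⟨x, y, rfl, hx, Or.inl hy⟩
  · exact ⟨x, y, rfl, hx, Or.inr hy⟩

lemma key {V : Type*} {G : SimpleGraph V} {v u x y : V}
    (hx : G.edist x v = 2) (hy : G.edist y v = 2 ∨ G.edist y v = 3)
    (hvu : G.Adj v u) (hd : edgeDist G s(v, u) s(x, y) = 1) :
    G.Adj u x ∨ G.Adj u y := by
  rw [edgeDist_eq] at hd
  have hvx : G.edist v x ≠ 1 := by rw [SimpleGraph.edist_comm, hx]; decide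
  have hvy : G.edist v y ≠ 1 := by
    rw [SimpleGraph.edist_comm]; rcases hy with h | h <;> rw [h] <;> decide
  rcases min_cases (G.edist v x ⊓ G.edist v y) (G.edist u x ⊓ G.edist u y) with
    ⟨h, _⟩ | ⟨h, _⟩ <;> rw [h] at hd
  · rcases min_cases (G.edist v x) (G.edist v y) with ⟨h2, _⟩ | ⟨h2, _⟩ <;>
      rw [h2] at hd <;> [exact absurd hd hvx; exact absurd hd hvy]
  · rcases min_cases (G.edist u x) (G.edist u y) with ⟨h2, _⟩ | ⟨h2, _⟩ <;> rw [h2] at hd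
    · exact Or.inl (SimpleGraph.edist_eq_one_iff_adj.mp hd)
    · exact Or.inr (SimpleGraph.edist_eq_one_iff_adj.mp hd)

lemma c4 {V : Type*} {G : SimpleGraph V} (hG : C4Free G) {v u₁ u₂ z : V}
    (h1 : G.Adj v u₁) (h2 : G.Adj v u₂) (h3 : G.Adj u₁ z) (h4 : G.Adj u₂ z)
    (hu : u₁ ≠ u₂) (hz : G.edist z v = 2 ∨ G.edist z v = 3) : False := by
  have hvz : v ≠ z := by
    rintro rfl
    rw [SimpleGraph.edist_self] at hz
    rcases hz with h | h <;> exact absurd h (by decide)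
  exact hG ⟨v, u₁, z, u₂, h1.ne, hvz, h2.ne, h3.ne, hu, fun h => h4.ne h.symm,
    h1, h3, h4.symm, h2.symm⟩

/-- In a finite C4-free graph, sum over e in D_v(0) of |Sect_e(2)| is at most 2|D_v(2)|. -/
theorem stmt_5 {V : Type*} [Fintype V] (G : SimpleGraph V) (hG : C4Free G) (v : V) :
    ∑ᶠ e ∈ D G v 0, (Sect G v e).ncard ≤ 2 * (D G v 2).ncard := by
  classical
  have hfin0 : (D G v 0).Finite := Set.toFinite _
  have hfin2 : (D G v 2).Finite := Set.toFinite _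
  set S := hfin0.toFinset with hS
  set U := hfin2.toFinset with hU
  rw [finsum_mem_eq_finite_toFinset_sum _ hfin0, Set.ncard_eq_toFinset_card _ hfin2]
  have hsub : ∀ e, (Sect G v e).ncard = (U.filter (· ∈ Sect G v e)).card := by
    intro e
    rw [← Set.ncard_coe_finset]
    congr 1
    ext f
    simp only [Finset.coe_filter, Set.mem_setOf_eq, hU, Set.Finite.mem_toFinset]
    exact ⟨fun h => ⟨h.1, h⟩, fun h => h.2⟩
  calc ∑ e ∈ S, (Sect G v e).ncard
      = ∑ e ∈ S, ∑ f ∈ U, if f ∈ Sect G v e then 1 else 0 := by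
        simp_rw [hsub, Finset.card_filter]
    _ = ∑ f ∈ U, ∑ e ∈ S, if f ∈ Sect G v e then 1 else 0 := Finset.sum_comm
    _ ≤ ∑ f ∈ U, 2 := by
        refine Finset.sum_le_sum fun f hfU => ?_
        rw [← Finset.card_filter]
        by_contra hlt
        push_neg at hlt
        obtain ⟨e₁, he₁, e₂, he₂, e₃, he₃, h12, h13, h23⟩ :=
          Finset.two_lt_card.mp hlt
        simp only [Finset.mem_filter, hS, Set.Finite.mem_toFinset] at he₁ he₂ he₃
        obtain ⟨x, y, rfl, hx, hy⟩ := mem_D2 (hfin2.mem_toFinset.mp hfU)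
        have hx' : G.edist x v = 2 ∨ G.edist x v = 3 := Or.inl hx
        obtain ⟨u₁, rfl, hu₁⟩ := mem_D0 he₁.1
        obtain ⟨u₂, rfl, hu₂⟩ := mem_D0 he₂.1
        obtain ⟨u₃, rfl, hu₃⟩ := mem_D0 he₃.1
        have k₁ := key hx hy hu₁ he₁.2.2
        have k₂ := key hx hy hu₂ he₂.2.2
        have k₃ := key hx hy hu₃ he₃.2.2
        have n12 : u₁ ≠ u₂ := fun h => h12 (by rw [h])
        have n13 : u₁ ≠ u₃ := fun h => h13 (by rw [h])
        have n23 : u₂ ≠ u₃ := fun h => h23 (by rw [h])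
        rcases k₁ with k₁ | k₁ <;> rcases k₂ with k₂ | k₂ <;> rcases k₃ with k₃ | k₃
        · exact c4 hG hu₁ hu₂ k₁ k₂ n12 hx'
        · exact c4 hG hu₁ hu₂ k₁ k₂ n12 hx'
        · exact c4 hG hu₁ hu₃ k₁ k₃ n13 hx'
        · exact c4 hG hu₂ hu₃ k₂ k₃ n23 hy
        · exact c4 hG hu₂ hu₃ k₂ k₃ n23 hx'
        · exact c4 hG hu₁ hu₃ k₁ k₃ n13 hy
        · exact c4 hG hu₁ hu₂ k₁ k₂ n12 hy
        · exact c4 hG hu₁ hu₂ k₁ k₂ n12 hy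
    _ = 2 * U.card := by rw [Finset.sum_const, smul_eq_mul, mul_comm]
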